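/- Let I ⊆ ℝ be an interval, v : I → ℝ² twice continuously differentiable with ‖v(t)‖ = 1 for all t ∈ I, μ : I → ℝ a function, and C ∈ ℝ² a constant vector such that v̈(t) + μ(t)·v(t) = C for all t ∈ I. Fix a ∈ I and set c := ‖v̇(a)‖² − 2⟨C, v(a)⟩. Then μ(t) = (3‖v̇(t)‖² − c)/2 for all t ∈ I. -/

import Mathlib

open scoped RealInnerProductSpace

/-- If `v` is a C² unit-circle-valued map on an interval
satisfying `v̈ + μ v = C`, and `c := ‖v̇ a‖² - 2⟨C, v a⟩` for a fixed `a` in the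
interval, then `μ t = (3‖v̇ t‖² - c)/2` on the interval. -/
theorem mu_eq_of_elastica
    (I : Set ℝ) (hI : I.OrdConnected) (hInt : I.Nontrivial)
    (v v' v'' : ℝ → EuclideanSpace ℝ (Fin 2))
    (hv : ∀ t ∈ I, HasDerivWithinAt v (v' t) I t)
    (hv' : ∀ t ∈ I, HasDerivWithinAt v' (v'' t) I t)
    (hv'' : ContinuousOn v'' I)
    (hunit : ∀ t ∈ I, ‖v t‖ = 1)
    (μ : ℝ → ℝ) (C : EuclideanSpace ℝ (Fin 2))
    (hEL : ∀ t ∈ I, v'' t + μ t • v t = C)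
    (a : ℝ) (ha : a ∈ I)
    (c : ℝ) (hc : c = ‖v' a‖ ^ 2 - 2 * ⟪C, v a⟫) :
    ∀ t ∈ I, μ t = (3 * ‖v' t‖ ^ 2 - c) / 2 := by
  have hconv : Convex ℝ I := hI.convex
  have hne : (interior I).Nonempty := by
    obtain ⟨x, hx, y, hy, hxy⟩ := hInt
    rcases lt_or_gt_of_ne hxy with h | h
    · have hsub : Set.Ioo x y ⊆ I := fun z hz => hI.out hx hy ⟨hz.1.le, hz.2.le⟩
      exact ⟨(x + y) / 2, interior_maximal hsub isOpen_Ioo ⟨by linarith, by linarith⟩⟩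
    · have hsub : Set.Ioo y x ⊆ I := fun z hz => hI.out hy hx ⟨hz.1.le, hz.2.le⟩
      exact ⟨(y + x) / 2, interior_maximal hsub isOpen_Ioo ⟨by linarith, by linarith⟩⟩
  have hud : UniqueDiffOn ℝ I := uniqueDiffOn_convex hconv hne
  have hvv : ∀ t ∈ I, ⟪v t, v t⟫ = 1 := fun t ht => by
    rw [real_inner_self_eq_norm_sq, hunit t ht]; norm_num
  -- Step 1: ⟪v, v'⟫ = 0 on I
  have step1 : ∀ t ∈ I, ⟪v t, v' t⟫ = 0 := by
    intro t ht
    have h1 : HasDerivWithinAt (fun s => ⟪v s, v s⟫) (⟪v t, v' t⟫ + ⟪v' t, v t⟫) I t :=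
      (hv t ht).inner ℝ (hv t ht)
    have h2 : HasDerivWithinAt (fun s => ⟪v s, v s⟫) 0 I t :=
      (hasDerivWithinAt_const t I (1 : ℝ)).congr (fun s hs => hvv s hs) (hvv t ht)
    have heq : ⟪v t, v' t⟫ + ⟪v' t, v t⟫ = 0 := by
      rw [← h1.derivWithin (hud t ht), h2.derivWithin (hud t ht)]
    have hcomm : ⟪v' t, v t⟫ = ⟪v t, v' t⟫ := real_inner_comm _ _
    linarith
  -- Step 2: ⟪v, v''⟫ + ‖v'‖² = 0 on I
  have step2 : ∀ t ∈ I, ⟪v t, v'' t⟫ + ‖v' t‖ ^ 2 = 0 := by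
    intro t ht
    have h1 : HasDerivWithinAt (fun s => ⟪v s, v' s⟫) (⟪v t, v'' t⟫ + ⟪v' t, v' t⟫) I t :=
      (hv t ht).inner ℝ (hv' t ht)
    have h2 : HasDerivWithinAt (fun s => ⟪v s, v' s⟫) 0 I t :=
      (hasDerivWithinAt_const t I (0 : ℝ)).congr (fun s hs => step1 s hs) (step1 t ht)
    have heq : ⟪v t, v'' t⟫ + ⟪v' t, v' t⟫ = 0 := by
      rw [← h1.derivWithin (hud t ht), h2.derivWithin (hud t ht)]
    rw [real_inner_self_eq_norm_sq] at heq
    linarith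
  -- Step 3: μ = ⟪C, v⟫ + ‖v'‖² on I
  have step3 : ∀ t ∈ I, μ t = ⟪C, v t⟫ + ‖v' t‖ ^ 2 := by
    intro t ht
    have h := congrArg (fun w => ⟪v t, w⟫) (hEL t ht)
    simp only [inner_add_right, real_inner_smul_right, hvv t ht, mul_one] at h
    have hcomm : ⟪v t, C⟫ = ⟪C, v t⟫ := real_inner_comm _ _
    have h2 := step2 t ht
    linarith
  -- Step 4: the energy E = ‖v'‖² - 2⟪C, v⟫ is constant on I
  have step4 : ∀ t ∈ I, ⟪v' t, v' t⟫ - 2 * ⟪C, v t⟫ = ⟪v' a, v' a⟫ - 2 * ⟪C, v a⟫ := by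
    intro t ht
    have hder : ∀ s ∈ I,
        HasDerivWithinAt (fun u => ⟪v' u, v' u⟫ - 2 * ⟪C, v u⟫) 0 I s := by
      intro s hs
      have h1 : HasDerivWithinAt (fun u => ⟪v' u, v' u⟫) (⟪v' s, v'' s⟫ + ⟪v'' s, v' s⟫) I s :=
        (hv' s hs).inner ℝ (hv' s hs)
      have h2 : HasDerivWithinAt (fun u => ⟪C, v u⟫) (⟪C, v' s⟫ + ⟪(0 : EuclideanSpace ℝ (Fin 2)), v s⟫) I s :=
        (hasDerivWithinAt_const s I C).inner ℝ (hv s hs)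
      have h3 := h1.sub (h2.const_mul (2 : ℝ))
      have hv''eq : v'' s = C - μ s • v s := by
        have := hEL s hs; rw [← this]; abel
      have hval : ⟪v'' s, v' s⟫ = ⟪C, v' s⟫ := by
        rw [hv''eq, inner_sub_left, real_inner_smul_left]
        have : ⟪v s, v' s⟫ = 0 := step1 s hs
        rw [this]; ring
      have hcomm : ⟪v' s, v'' s⟫ = ⟪v'' s, v' s⟫ := real_inner_comm _ _
      refine h3.congr_deriv ?_
      rw [hcomm, hval, inner_zero_left]
      ring
    have hbound : ∀ s ∈ I, ‖(0 : ℝ)‖ ≤ 0 := fun s _ => by simp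
    have := Convex.norm_image_sub_le_of_norm_hasDerivWithin_le
      (f := fun u => ⟪v' u, v' u⟫ - 2 * ⟪C, v u⟫) (f' := fun _ => (0 : ℝ))
      hder hbound hconv ha ht
    simp only [zero_mul, norm_le_zero_iff, sub_eq_zero] at this
    exact this
  intro t ht
  have h4 := step4 t ht
  rw [real_inner_self_eq_norm_sq, real_inner_self_eq_norm_sq] at h4
  have h3 := step3 t ht
  rw [hc]
  linarith
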